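/- Let G be an almost-chordal graph, let C = {v_1, v_2, v_3, v_4} be the vertex set of an induced 4-cycle in G with edges v_1v_2, v_2v_3, v_3v_4, v_4v_1, and let G' = G/v_1v_2 be the graph obtained by contracting the edge v_1v_2, with v_{12} the vertex of G' resulting from the contraction. Then every induced 4-cycle of G' that contains v_{12} is not new; that is, for every induced 4-cycle C' of G' containing v_{12}, the two neighbors of v_{12} on C' are both adjacent to v_1 in G or both adjacent to v_2 in G. -/

import Mathlib

open SimpleGraph

variable {V : Type*}

/-- `f : ZMod n → V` enumerates the vertices of an induced (chordless) cycle of length `n`: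
it is injective and two listed vertices are adjacent iff they are consecutive on the cycle. -/
def IsInducedCycle (G : SimpleGraph V) {n : ℕ} (f : ZMod n → V) : Prop :=
  Function.Injective f ∧
    ∀ i j : ZMod n, G.Adj (f i) (f j) ↔ (j = i + 1 ∨ i = j + 1)

/-- A graph is chordal if it has no induced cycle of length at least 4. -/
def Chordal (G : SimpleGraph V) : Prop :=
  ∀ n : ℕ, 4 ≤ n → ∀ f : ZMod n → V, ¬ IsInducedCycle G f

/-- A hole is an induced chordless cycle of length at least 5. -/
def HasHole (G : SimpleGraph V) : Prop :=
  ∃ (n : ℕ) (f : ZMod n → V), 5 ≤ n ∧ IsInducedCycle G f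

/-- A house: an induced 4-cycle together with a fifth vertex adjacent to exactly two
adjacent vertices of the 4-cycle (as an induced subgraph). -/
def HasHouse (G : SimpleGraph V) : Prop :=
  ∃ (f : ZMod 4 → V) (e : V), IsInducedCycle G f ∧ (∀ i, e ≠ f i) ∧
    G.Adj e (f 0) ∧ G.Adj e (f 1) ∧ ¬ G.Adj e (f 2) ∧ ¬ G.Adj e (f 3)

/-- `s` is the vertex set of an induced 4-cycle of `G`. -/
def IsC4Set (G : SimpleGraph V) (s : Set V) : Prop :=
  ∃ f : ZMod 4 → V, IsInducedCycle G f ∧ s = Set.range f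

/-- Almost-chordal: no hole, no induced house, and any two distinct induced 4-cycles
share at most one vertex. -/
def AlmostChordal (G : SimpleGraph V) : Prop :=
  ¬ HasHole G ∧ ¬ HasHouse G ∧
    ∀ s t : Set V, IsC4Set G s → IsC4Set G t → s ≠ t → (s ∩ t).Subsingleton

/-- `G` is `k`-connected: more than `k` vertices, and removing fewer than `k` vertices
leaves it connected. -/
def KConnected {W : Type*} [Fintype W] (k : ℕ) (G : SimpleGraph W) : Prop :=
  k < Fintype.card W ∧
    ∀ S : Finset W, S.card < k → (G.induce ((↑S : Set W)ᶜ)).Connected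

/-- The contraction `G/uv`: `v` is removed and merged into `u`, whose new neighbourhood is
`(N(u) ∪ N(v)) \ {u, v}`. -/
def contractEdge (G : SimpleGraph V) (u v : V) : SimpleGraph {x : V // x ≠ v} :=
  SimpleGraph.fromRel fun a b =>
    G.Adj a.1 b.1 ∨ (a.1 = u ∧ G.Adj v b.1) ∨ (b.1 = u ∧ G.Adj v a.1)

/-- `S` is a separator: its removal disconnects `G`. -/
def IsSeparator (G : SimpleGraph V) (S : Finset V) : Prop :=
  ¬ (G.induce ((↑S : Set V)ᶜ)).Preconnected

/-- `S` is a minimal separator: it is a separator and removing any set of fewer than `|S|`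
vertices leaves `G` connected. -/
def IsMinimalSeparator (G : SimpleGraph V) (S : Finset V) : Prop :=
  IsSeparator G S ∧
    ∀ S' : Finset V, S'.card < S.card → (G.induce ((↑S' : Set V)ᶜ)).Connected

lemma contract_adj_of_ne (G : SimpleGraph V) {u v : V} {x y : {z : V // z ≠ v}}
    (hx : x.1 ≠ u) (hy : y.1 ≠ u) :
    (contractEdge G u v).Adj x y ↔ G.Adj x.1 y.1 := by
  rw [contractEdge, fromRel_adj]
  constructor
  · rintro ⟨hne, (h | ⟨h1, -⟩ | ⟨h1, -⟩) | (h | ⟨h1, -⟩ | ⟨h1, -⟩)⟩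
    · exact h
    · exact absurd h1 hx
    · exact absurd h1 hy
    · exact h.symm
    · exact absurd h1 hy
    · exact absurd h1 hx
  · intro h
    exact ⟨fun he => G.loopless.irrefl _ (he ▸ h), Or.inl (Or.inl h)⟩

lemma contract_adj_merged (G : SimpleGraph V) {u v : V} {x y : {z : V // z ≠ v}}
    (hx : x.1 = u) (hy : y.1 ≠ u) :
    (contractEdge G u v).Adj x y ↔ (G.Adj u y.1 ∨ G.Adj v y.1) := by
  rw [contractEdge, fromRel_adj]
  constructor
  · rintro ⟨hne, (h | ⟨-, h2⟩ | ⟨h1, -⟩) | (h | ⟨h1, -⟩ | ⟨-, h2⟩)⟩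
    · exact Or.inl (hx ▸ h)
    · exact Or.inr h2
    · exact absurd h1 hy
    · exact Or.inl (hx ▸ h.symm)
    · exact absurd h1 hy
    · exact Or.inr h2
  · rintro (h | h)
    · exact ⟨fun he => hy (he ▸ hx), Or.inl (Or.inl (hx ▸ h))⟩
    · exact ⟨fun he => hy (he ▸ hx), Or.inl (Or.inr (Or.inl ⟨hx, h⟩))⟩

lemma zmod5_cases (x : ZMod 5) : x = 0 ∨ x = 1 ∨ x = 2 ∨ x = 3 ∨ x = 4 := by
  revert x; decide

lemma hole5 (G : SimpleGraph V) (p q r s t : V)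
    (e1 : G.Adj p q) (e2 : G.Adj q r) (e3 : G.Adj r s) (e4 : G.Adj s t) (e5 : G.Adj t p)
    (n1 : ¬ G.Adj p r) (n2 : ¬ G.Adj p s) (n3 : ¬ G.Adj q s) (n4 : ¬ G.Adj q t)
    (n5 : ¬ G.Adj r t)
    (d1 : p ≠ r) (d2 : p ≠ s) (d3 : q ≠ s) (d4 : q ≠ t) (d5 : r ≠ t) :
    HasHole G := by
  refine ⟨5, ![p, q, r, s, t], le_refl 5, ?_, ?_⟩
  · intro x y hxy
    rcases zmod5_cases x with rfl | rfl | rfl | rfl | rfl <;>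
      rcases zmod5_cases y with rfl | rfl | rfl | rfl | rfl <;>
      first
      | rfl
      | exact absurd hxy (by
          first
          | exact e1.ne | exact e2.ne | exact e3.ne | exact e4.ne | exact e5.ne
          | exact e1.ne' | exact e2.ne' | exact e3.ne' | exact e4.ne' | exact e5.ne'
          | exact d1 | exact d2 | exact d3 | exact d4 | exact d5
          | exact d1.symm | exact d2.symm | exact d3.symm | exact d4.symm | exact d5.symm)
  · intro x y
    rcases zmod5_cases x with rfl | rfl | rfl | rfl | rfl <;>
      rcases zmod5_cases y with rfl | rfl | rfl | rfl | rfl <;>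
      first
      | (refine iff_of_true ?_ (by decide);
         first
         | exact e1 | exact e2 | exact e3 | exact e4 | exact e5
         | exact e1.symm | exact e2.symm | exact e3.symm | exact e4.symm | exact e5.symm)
      | (refine iff_of_false ?_ (by decide);
         first
         | exact n1 | exact n2 | exact n3 | exact n4 | exact n5
         | exact fun h => n1 h.symm
         | exact fun h => n2 h.symm
         | exact fun h => n3 h.symm
         | exact fun h => n4 h.symm
         | exact fun h => n5 h.symm
         | exact G.loopless.irrefl _)

/-- Contracting an edge of an induced 4-cycle of an almost-chordal graph creates no new
induced 4-cycle: for any induced 4-cycle of the contracted graph through the merged vertex,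
its two neighbours on that cycle are both adjacent to `v₁` in `G` or both adjacent to `v₂`
in `G` (STATEMENT 8). -/
theorem almost_chordal_contract_no_new_C4
    (G : SimpleGraph V) (hG : AlmostChordal G)
    (f : ZMod 4 → V) (hf : IsInducedCycle G f)
    (g : ZMod 4 → {x : V // x ≠ f 1})
    (hg : IsInducedCycle (contractEdge G (f 0) (f 1)) g)
    (i : ZMod 4) (hi : (g i).1 = f 0) :
    (G.Adj (f 0) (g (i + 1)).1 ∧ G.Adj (f 0) (g (i - 1)).1) ∨
    (G.Adj (f 1) (g (i + 1)).1 ∧ G.Adj (f 1) (g (i - 1)).1) := by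
  obtain ⟨hnh, -, -⟩ := hG
  obtain ⟨hginj, hgadj⟩ := hg
  have h01 : G.Adj (f 0) (f 1) := (hf.2 0 1).mpr (Or.inl (by decide))
  have him : i - 1 = i + 3 := by
    rw [sub_eq_add_neg, (by decide : (-1 : ZMod 4) = 3)]
  -- clean adjacency iff on shifted indices
  have hadj' : ∀ k l : ZMod 4,
      (contractEdge G (f 0) (f 1)).Adj (g (i + k)) (g (i + l)) ↔ (l = k + 1 ∨ k = l + 1) := by
    intro k l
    rw [hgadj]
    constructor
    · rintro (h | h)
      · exact Or.inl ((add_right_inj i).mp (by rw [h, add_assoc]))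
      · exact Or.inr ((add_right_inj i).mp (by rw [h, add_assoc]))
    · rintro (h | h)
      · exact Or.inl (by rw [h, add_assoc])
      · exact Or.inr (by rw [h, add_assoc])
  have hne : ∀ k l : ZMod 4, k ≠ l → (g (i + k)).1 ≠ (g (i + l)).1 := by
    intro k l hkl h
    exact hkl ((add_right_inj i).mp (hginj (Subtype.ext h)))
  have hi0 : (g (i + 0)).1 = f 0 := by rw [add_zero]; exact hi
  -- the three other vertices of the contracted cycle
  have hu1 : (g (i + 1)).1 ≠ f 0 := fun h => (hne 1 0 (by decide)) (h.trans hi0.symm)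
  have hu2 : (g (i + 2)).1 ≠ f 0 := fun h => (hne 2 0 (by decide)) (h.trans hi0.symm)
  have hu3 : (g (i + 3)).1 ≠ f 0 := fun h => (hne 3 0 (by decide)) (h.trans hi0.symm)
  -- G-edges among u1, u2, u3
  have e12 : G.Adj (g (i + 1)).1 (g (i + 2)).1 :=
    (contract_adj_of_ne G hu1 hu2).mp ((hadj' 1 2).mpr (Or.inl (by decide)))
  have e23 : G.Adj (g (i + 2)).1 (g (i + 3)).1 :=
    (contract_adj_of_ne G hu2 hu3).mp ((hadj' 2 3).mpr (Or.inl (by decide)))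
  have n13 : ¬ G.Adj (g (i + 1)).1 (g (i + 3)).1 := fun h => by
    have := (hadj' 1 3).mp ((contract_adj_of_ne G hu1 hu3).mpr h)
    revert this; decide
  -- merged-vertex adjacencies
  have hw1 : G.Adj (f 0) (g (i + 1)).1 ∨ G.Adj (f 1) (g (i + 1)).1 :=
    (contract_adj_merged G hi0 hu1).mp ((hadj' 0 1).mpr (Or.inl (by decide)))
  have hw3 : G.Adj (f 0) (g (i + 3)).1 ∨ G.Adj (f 1) (g (i + 3)).1 :=
    (contract_adj_merged G hi0 hu3).mp ((hadj' 0 3).mpr (Or.inr (by decide)))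
  have hw2 : ¬ (G.Adj (f 0) (g (i + 2)).1 ∨ G.Adj (f 1) (g (i + 2)).1) := fun h => by
    have := (hadj' 0 2).mp ((contract_adj_merged G hi0 hu2).mpr h)
    revert this; decide
  push_neg at hw2
  obtain ⟨n02, n12'⟩ := hw2
  rw [him]
  by_contra hcon
  push_neg at hcon
  obtain ⟨hc0, hc1⟩ := hcon
  rcases hw1 with h1 | h1 <;> rcases hw3 with h3 | h3
  · exact hc0 h1 h3
  · -- f0 ~ u1, f1 ~ u3 : hole f0 - u1 - u2 - u3 - f1 - f0
    have hn11 : ¬ G.Adj (f 1) (g (i + 1)).1 := fun h => hc1 h h3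
    exact hnh (hole5 G (f 0) (g (i + 1)).1 (g (i + 2)).1 (g (i + 3)).1 (f 1)
      h1 e12 e23 h3.symm h01.symm
      n02 (hc0 h1) n13 (fun h => hn11 h.symm) (fun h => n12' h.symm)
      (fun h => hu2 h.symm) (fun h => hu3 h.symm) (hne 1 3 (by decide))
      (g (i + 1)).2 (g (i + 2)).2)
  · -- f1 ~ u1, f0 ~ u3 : hole f0 - u3 - u2 - u1 - f1 - f0
    have hn01 : ¬ G.Adj (f 0) (g (i + 1)).1 := fun h => hc0 h h3
    exact hnh (hole5 G (f 0) (g (i + 3)).1 (g (i + 2)).1 (g (i + 1)).1 (f 1)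
      h3 e23.symm e12.symm h1.symm h01.symm
      n02 hn01 (fun h => n13 h.symm) (fun h => (hc1 h1) h.symm) (fun h => n12' h.symm)
      (fun h => hu2 h.symm) (fun h => hu1 h.symm) (hne 3 1 (by decide))
      (g (i + 3)).2 (g (i + 2)).2)
  · exact hc1 h1 h3
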